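/- Under the hypotheses of the infinite-composition lemma, if S is a metric space and each P_λ is 1-Lipschitz, then the map P : S → S defined by P(s) = P_F(s) for any finite F containing Supp(s) is well-defined and 1-Lipschitz. -/

import Mathlib

/-- Apply the maps `P a` for `a` in the list, in list order (head first). -/
def applySorted {S Λ : Type*} (P : Λ → S → S) : List Λ → S → S
  | [], s => s
  | a :: l, s => applySorted P l (P a s)

/-- The support of `s`: the indices `lam` such that `P lam` does not fix `s`. -/
def Supp {S Λ : Type*} (P : Λ → S → S) (s : S) : Set Λ := {lam | P lam s ≠ s}

lemma applySorted_of_supp_empty {S Λ : Type*} (P : Λ → S → S) :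
    ∀ (l : List Λ) (s : S), Supp P s = ∅ → applySorted P l s = s := by
  intro l
  induction l with
  | nil => intro s _; rfl
  | cons a t ih =>
      intro s hs
      have ha : P a s = s := by
        by_contra h
        have : a ∈ Supp P s := h
        rw [hs] at this
        exact this
      simp only [applySorted, ha]
      exact ih s hs

lemma applySorted_reduce {S Λ : Type*} [LinearOrder Λ] (P : Λ → S → S)
    (hleast : ∀ s lam, IsLeast (Supp P s) lam → Supp P (P lam s) ⊆ Supp P s \ {lam}) :
    ∀ (l : List Λ), l.Pairwise (· ≤ ·) → ∀ s : S, Supp P s ⊆ {x | x ∈ l} →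
      (Supp P s).Nonempty →
      ∃ a t, IsLeast (Supp P s) a ∧ applySorted P l s = applySorted P t (P a s) ∧
        t.Pairwise (· ≤ ·) ∧ Supp P (P a s) ⊆ {x | x ∈ t} := by
  intro l
  induction l with
  | nil =>
      intro _ s hsub ⟨a, ha⟩
      exact absurd (hsub ha) (by simp)
  | cons a t ih =>
      intro hsort s hsub hne
      by_cases ha : a ∈ Supp P s
      · have hle : IsLeast (Supp P s) a := by
          constructor
          · exact ha
          · intro b hb
            rcases List.mem_cons.mp (hsub hb) with h | h
            · exact le_of_eq h.symm
            · exact (List.pairwise_cons.mp hsort).1 b h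
        refine ⟨a, t, hle, rfl, (List.pairwise_cons.mp hsort).2, ?_⟩
        intro x hx
        have h2 := hleast s a hle hx
        rcases List.mem_cons.mp (hsub h2.1) with h | h
        · exact absurd h h2.2
        · exact h
      · have hfix : P a s = s := by
          by_contra h; exact ha h
        have hsub' : Supp P s ⊆ {x | x ∈ t} := by
          intro x hx
          rcases List.mem_cons.mp (hsub hx) with h | h
          · exact absurd (h ▸ hx) ha
          · exact h
        have := ih (List.pairwise_cons.mp hsort).2 s hsub' hne
        rcases this with ⟨b, u, hb, heq, hu, hsu⟩
        exact ⟨b, u, hb, by simp only [applySorted, hfix]; exact heq, hu, hsu⟩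

lemma applySorted_well_defined {S Λ : Type*} [LinearOrder Λ] (P : Λ → S → S)
    (hfin : ∀ s, (Supp P s).Finite)
    (hleast : ∀ s lam, IsLeast (Supp P s) lam → Supp P (P lam s) ⊆ Supp P s \ {lam}) :
    ∀ (n : ℕ) (s : S), (hfin s).toFinset.card ≤ n →
      ∀ l₁ l₂ : List Λ, l₁.Pairwise (· ≤ ·) → l₂.Pairwise (· ≤ ·) →
        Supp P s ⊆ {x | x ∈ l₁} → Supp P s ⊆ {x | x ∈ l₂} →
        applySorted P l₁ s = applySorted P l₂ s := by
  intro n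
  induction n with
  | zero =>
      intro s hcard l₁ l₂ _ _ _ _
      have : Supp P s = ∅ := by
        have := Finset.card_eq_zero.mp (Nat.le_zero.mp hcard)
        have h2 := (hfin s).coe_toFinset
        rw [this] at h2
        simpa using h2.symm
      rw [applySorted_of_supp_empty P l₁ s this, applySorted_of_supp_empty P l₂ s this]
  | succ n ih =>
      intro s hcard l₁ l₂ hs₁ hs₂ hsub₁ hsub₂
      rcases Set.eq_empty_or_nonempty (Supp P s) with hemp | hne
      · rw [applySorted_of_supp_empty P l₁ s hemp, applySorted_of_supp_empty P l₂ s hemp]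
      · obtain ⟨a₁, t₁, hle₁, heq₁, hst₁, hsub₁'⟩ :=
          applySorted_reduce P hleast l₁ hs₁ s hsub₁ hne
        obtain ⟨a₂, t₂, hle₂, heq₂, hst₂, hsub₂'⟩ :=
          applySorted_reduce P hleast l₂ hs₂ s hsub₂ hne
        have haa : a₁ = a₂ := hle₁.unique hle₂
        subst haa
        rw [heq₁, heq₂]
        apply ih (P a₁ s) ?_ t₁ t₂ hst₁ hst₂ hsub₁' hsub₂'
        have hsubS : (hfin (P a₁ s)).toFinset ⊆ (hfin s).toFinset.erase a₁ := by
          intro x hx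
          rw [Set.Finite.mem_toFinset] at hx
          have := hleast s a₁ hle₁ hx
          rw [Finset.mem_erase, Set.Finite.mem_toFinset]
          exact ⟨this.2, this.1⟩
        have hmem : a₁ ∈ (hfin s).toFinset := (Set.Finite.mem_toFinset _).mpr hle₁.1
        calc (hfin (P a₁ s)).toFinset.card ≤ ((hfin s).toFinset.erase a₁).card :=
              Finset.card_le_card hsubS
          _ = (hfin s).toFinset.card - 1 := Finset.card_erase_of_mem hmem
          _ ≤ n := by omega

lemma applySorted_lipschitz {S Λ : Type*} [MetricSpace S] (P : Λ → S → S)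
    (hlip : ∀ lam, LipschitzWith 1 (P lam)) :
    ∀ l : List Λ, LipschitzWith 1 (applySorted P l) := by
  intro l
  induction l with
  | nil => exact LipschitzWith.id
  | cons a t ih =>
      have : applySorted P (a :: t) = (applySorted P t) ∘ (P a) := rfl
      rw [this]
      simpa using ih.comp (hlip a)

/-- If `S` is a metric space and each `P lam` is 1-Lipschitz, then under the hypotheses of the
infinite-composition lemma the map `P : s ↦ P_F(s)` (for any finite `F ⊇ Supp(s)`) is a
well-defined 1-Lipschitz map. -/
theorem stmt4 {S Λ : Type*} [MetricSpace S] [LinearOrder Λ] (P : Λ → S → S)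
    (hfin : ∀ s, (Supp P s).Finite)
    (hleast : ∀ s lam, IsLeast (Supp P s) lam → Supp P (P lam s) ⊆ Supp P s \ {lam})
    (hlip : ∀ lam, LipschitzWith 1 (P lam)) :
    ∃ Q : S → S,
      (∀ s, ∀ F : Finset Λ, Supp P s ⊆ ↑F → Q s = applySorted P (F.sort (· ≤ ·)) s) ∧
      LipschitzWith 1 Q := by
  refine ⟨fun s => applySorted P ((hfin s).toFinset.sort (· ≤ ·)) s, ?_, ?_⟩
  · intro s F hF
    apply applySorted_well_defined P hfin hleast (hfin s).toFinset.card s le_rfl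
    · exact Finset.pairwise_sort _ _
    · exact Finset.pairwise_sort _ _
    · intro x hx
      show x ∈ (hfin s).toFinset.sort (· ≤ ·)
      rw [Finset.mem_sort, Set.Finite.mem_toFinset]
      exact hx
    · intro x hx
      show x ∈ F.sort (· ≤ ·)
      rw [Finset.mem_sort]
      exact hF hx
  · rw [lipschitzWith_iff_dist_le_mul]
    intro x y
    set F := (hfin x).toFinset ∪ (hfin y).toFinset with hFdef
    have hx : applySorted P ((hfin x).toFinset.sort (· ≤ ·)) x
        = applySorted P (F.sort (· ≤ ·)) x := by
      refine applySorted_well_defined P hfin hleast F.card x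
        (Finset.card_le_card (Finset.subset_union_left)) _ _
        (Finset.pairwise_sort _ _) (Finset.pairwise_sort _ _) ?_ ?_
      · intro z hz
        show z ∈ (hfin x).toFinset.sort (· ≤ ·)
        rw [Finset.mem_sort, Set.Finite.mem_toFinset]
        exact hz
      · intro z hz
        show z ∈ F.sort (· ≤ ·)
        rw [Finset.mem_sort, hFdef, Finset.mem_union]
        exact Or.inl ((Set.Finite.mem_toFinset _).mpr hz)
    have hy : applySorted P ((hfin y).toFinset.sort (· ≤ ·)) y
        = applySorted P (F.sort (· ≤ ·)) y := by
      refine applySorted_well_defined P hfin hleast F.card y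
        (Finset.card_le_card (Finset.subset_union_right)) _ _
        (Finset.pairwise_sort _ _) (Finset.pairwise_sort _ _) ?_ ?_
      · intro z hz
        show z ∈ (hfin y).toFinset.sort (· ≤ ·)
        rw [Finset.mem_sort, Set.Finite.mem_toFinset]
        exact hz
      · intro z hz
        show z ∈ F.sort (· ≤ ·)
        rw [Finset.mem_sort, hFdef, Finset.mem_union]
        exact Or.inr ((Set.Finite.mem_toFinset _).mpr hz)
    rw [hx, hy]
    simpa using (applySorted_lipschitz P hlip (F.sort (· ≤ ·))).dist_le_mul x y
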